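/- Let p be an odd prime and q = (2^(p-1) - 1)/p the Fermat quotient of p to base 2. Then, in ZMod p, twice the sum of the inverses of the even integers i with 0 < i < p is congruent to -2q; equivalently, the sum of the inverses of the integers 1, 2, ..., (p-1)/2 is congruent to -2q modulo p. -/

import Mathlib

open Finset

lemma aux_choose_pred (p : ℕ) (hp : p.Prime) : ∀ j, j < p →
    ((Nat.choose (p-1) j : ℕ) : ZMod p) = (-1)^j := by
  intro j
  induction j with
  | zero => simp
  | succ j ih =>
    intro hj
    have hj' : j < p := Nat.lt_of_succ_lt hj
    have h0 : ((Nat.choose p (j+1) : ℕ) : ZMod p) = 0 := by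
      rw [ZMod.natCast_eq_zero_iff]
      exact Nat.Prime.dvd_choose_self hp (Nat.succ_ne_zero j) hj
    have hpas : Nat.choose p (j+1) = Nat.choose (p-1) j + Nat.choose (p-1) (j+1) := by
      conv_lhs => rw [show p = (p-1)+1 by omega]
      exact Nat.choose_succ_succ _ _
    rw [hpas, Nat.cast_add, ih hj'] at h0
    rw [pow_succ]
    linear_combination h0

lemma aux_sum_univ (p : ℕ) [Fact p.Prime] (hp2 : 2 < p) :
    ∑ x : ZMod p, x = 0 := by
  have h : ∑ x : ZMod p, x = ∑ x : ZMod p, -x :=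
    Fintype.sum_bijective (fun x => -x) neg_involutive.bijective _ _ (by intro x; simp)
  have h2 : (2 : ZMod p) * ∑ x : ZMod p, x = 0 := by
    rw [two_mul]
    nth_rewrite 2 [h]
    rw [← Finset.sum_add_distrib]
    simp
  have h2ne : (2 : ZMod p) ≠ 0 := by
    have := (ZMod.natCast_eq_zero_iff 2 p)
    intro hcon
    rw [show ((2:ZMod p)) = ((2:ℕ):ZMod p) by push_cast; ring] at hcon
    rw [this] at hcon
    have := Nat.le_of_dvd (by norm_num) hcon
    omega
  rcases mul_eq_zero.mp h2 with h | h
  · exact absurd h h2ne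
  · exact h

lemma aux_sum_inv (p : ℕ) (hp : p.Prime) (hp2 : 2 < p) :
    ∑ k ∈ Finset.Ico 1 p, ((k : ZMod p))⁻¹ = 0 := by
  haveI : Fact p.Prime := ⟨hp⟩
  have h1 : ∑ k ∈ Finset.Ico 1 p, ((k : ZMod p))⁻¹
      = ∑ k ∈ Finset.range p, ((k : ZMod p))⁻¹ := by
    rw [Finset.range_eq_Ico, Finset.sum_eq_sum_Ico_succ_bot (by omega : 0 < p)]
    simp
  have h2 : ∑ k ∈ Finset.range p, ((k : ZMod p))⁻¹ = ∑ x : ZMod p, x⁻¹ := by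
    refine Finset.sum_nbij' (fun k => (k : ZMod p)) (fun x => x.val) ?_ ?_ ?_ ?_ ?_
    · intro a _; exact Finset.mem_univ _
    · intro x _; exact Finset.mem_range.mpr (ZMod.val_lt x)
    · intro a ha; exact ZMod.val_natCast_of_lt (Finset.mem_range.mp ha)
    · intro x _; exact ZMod.natCast_zmod_val x
    · intro a _; rfl
  have h3 : ∑ x : ZMod p, x⁻¹ = ∑ x : ZMod p, x :=
    (Fintype.sum_bijective (fun x : ZMod p => x⁻¹) inv_involutive.bijective _ _
      (by intro x; simp)).symm
  rw [h1, h2, h3, aux_sum_univ p hp2]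

theorem sylvester_congruence (p : ℕ) (hp : p.Prime) (hp2 : 2 < p) :
    (2 * ∑ i ∈ (Finset.Ioo 0 p).filter (fun i => Even i), ((i : ZMod p))⁻¹
        = -(2 * (((2 ^ (p - 1) - 1) / p : ℕ) : ZMod p))) ∧
    (∑ i ∈ Finset.Icc 1 ((p - 1) / 2), ((i : ZMod p))⁻¹
        = -(2 * (((2 ^ (p - 1) - 1) / p : ℕ) : ZMod p))) := by
  haveI : Fact p.Prime := ⟨hp⟩
  have hodd : Odd p := hp.odd_of_ne_two (by omega)
  have hppos : 0 < p := by omega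
  have h2ne : (2 : ZMod p) ≠ 0 := by
    intro hcon
    rw [show ((2:ZMod p)) = ((2:ℕ):ZMod p) by push_cast; ring,
      ZMod.natCast_eq_zero_iff] at hcon
    have := Nat.le_of_dvd (by norm_num) hcon
    omega
  set q : ℕ := (2 ^ (p - 1) - 1) / p with hqdef
  have h1le : (1:ℕ) ≤ 2^(p-1) := Nat.one_le_two_pow
  have hdvd : p ∣ 2^(p-1) - 1 := by
    have hz : ((2^(p-1) - 1 : ℕ) : ZMod p) = 0 := by
      push_cast [h1le]
      rw [ZMod.pow_card_sub_one_eq_one h2ne]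
      ring
    rwa [ZMod.natCast_eq_zero_iff] at hz
  have hq1 : p * q = 2^(p-1) - 1 := Nat.mul_div_cancel' hdvd
  set c : ℕ → ℕ := fun k => Nat.choose p k / p with hcdef
  have hck : ∀ k ∈ Finset.Ico 1 p, p * c k = Nat.choose p k := by
    intro k hk
    simp only [Finset.mem_Ico] at hk
    exact Nat.mul_div_cancel' (hp.dvd_choose_self (by omega) hk.2)
  have hbinom : (∑ k ∈ Finset.Ico 1 p, Nat.choose p k) + 2 = 2^p := by
    have h := Nat.sum_range_choose p
    rw [Finset.range_eq_Ico, Finset.sum_eq_sum_Ico_succ_bot (by omega : 0 < p + 1)] at h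
    rw [Finset.sum_Ico_succ_top (by omega : 1 ≤ p)] at h
    simp only [Nat.choose_zero_right, Nat.choose_self] at h
    omega
  have hpowp : 2^p = 2 * 2^(p-1) := by
    conv_lhs => rw [show p = (p-1)+1 by omega]
    rw [pow_succ]
    ring
  have hsum : p * (2 * q) = p * ∑ k ∈ Finset.Ico 1 p, c k := by
    rw [Finset.mul_sum, Finset.sum_congr rfl hck]
    have e2 : 2 * (2^(p-1) - 1) = 2 * 2^(p-1) - 2 := by
      have := h1le
      omega
    calc p * (2 * q) = 2 * (p * q) := by ring
      _ = 2 * (2^(p-1) - 1) := by rw [hq1]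
      _ = 2 * 2^(p-1) - 2 := e2
      _ = 2^p - 2 := by rw [hpowp]
      _ = ∑ k ∈ Finset.Ico 1 p, Nat.choose p k := by omega
  have hsumN : 2 * q = ∑ k ∈ Finset.Ico 1 p, c k :=
    Nat.eq_of_mul_eq_mul_left hppos hsum
  -- pointwise identification of c k in ZMod p
  have hterm : ∀ k ∈ Finset.Ico 1 p, ((c k : ℕ) : ZMod p) = (-1)^(k-1) * ((k : ZMod p))⁻¹ := by
    intro k hk
    simp only [Finset.mem_Ico] at hk
    have hkc : p * (k * c k) = p * Nat.choose (p-1) (k-1) := by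
      have hs := Nat.add_one_mul_choose_eq (p-1) (k-1)
      rw [show p-1+1 = p by omega, show k-1+1 = k by omega] at hs
      calc p * (k * c k) = k * (p * c k) := by ring
        _ = k * Nat.choose p k := by rw [hck k (by simp [Finset.mem_Ico]; omega)]
        _ = p * Nat.choose (p-1) (k-1) := by rw [hs]; ring
    have h1 : k * c k = Nat.choose (p-1) (k-1) := Nat.eq_of_mul_eq_mul_left hppos hkc
    have hcast : (k : ZMod p) * (c k : ZMod p) = (-1)^(k-1) := by
      rw [← Nat.cast_mul, h1, aux_choose_pred p hp (k-1) (by omega)]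
    have kne : ((k : ℕ) : ZMod p) ≠ 0 := by
      rw [Ne, ZMod.natCast_eq_zero_iff]
      intro hcon
      have := Nat.le_of_dvd (by omega) hcon
      omega
    apply mul_left_cancel₀ kne
    rw [hcast]
    field_simp
  have hcastsum : ((2 * q : ℕ) : ZMod p) = ∑ k ∈ Finset.Ico 1 p, (-1:ZMod p)^(k-1) * ((k : ZMod p))⁻¹ := by
    rw [hsumN, Nat.cast_sum]
    exact Finset.sum_congr rfl hterm
  -- split by parity
  have hsplit : ∑ k ∈ Finset.Ico 1 p, (-1:ZMod p)^(k-1) * ((k : ZMod p))⁻¹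
      = (∑ k ∈ (Finset.Ico 1 p).filter (fun k => ¬ Even k), ((k : ZMod p))⁻¹)
        - (∑ k ∈ (Finset.Ico 1 p).filter (fun k => Even k), ((k : ZMod p))⁻¹) := by
    have hEv : ∑ k ∈ (Finset.Ico 1 p).filter (fun k => Even k), (-1:ZMod p)^(k-1) * ((k : ZMod p))⁻¹
        = -∑ k ∈ (Finset.Ico 1 p).filter (fun k => Even k), ((k : ZMod p))⁻¹ := by
      rw [← Finset.sum_neg_distrib]
      refine Finset.sum_congr rfl (fun k hk => ?_)
      simp only [Finset.mem_filter, Finset.mem_Ico] at hk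
      have hko : Odd (k - 1) := by
        rcases hk.2 with ⟨t, ht⟩
        exact ⟨t - 1, by omega⟩
      rw [Odd.neg_one_pow hko]; ring
    have hOd : ∑ k ∈ (Finset.Ico 1 p).filter (fun k => ¬ Even k), (-1:ZMod p)^(k-1) * ((k : ZMod p))⁻¹
        = ∑ k ∈ (Finset.Ico 1 p).filter (fun k => ¬ Even k), ((k : ZMod p))⁻¹ := by
      refine Finset.sum_congr rfl (fun k hk => ?_)
      simp only [Finset.mem_filter, Finset.mem_Ico] at hk
      have hke : Even (k - 1) := by
        have hkodd : Odd k := by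
          rcases Nat.even_or_odd k with h|h
          · exact absurd h hk.2
          · exact h
        rcases hkodd with ⟨t, ht⟩
        exact ⟨t, by omega⟩
      rw [Even.neg_one_pow hke]; ring
    rw [← Finset.sum_filter_add_sum_filter_not (Finset.Ico 1 p) (fun k => Even k)
      (fun k => (-1:ZMod p)^(k-1) * ((k : ZMod p))⁻¹), hEv, hOd]
    ring
  have hall : (∑ k ∈ (Finset.Ico 1 p).filter (fun k => Even k), ((k : ZMod p))⁻¹)
      + (∑ k ∈ (Finset.Ico 1 p).filter (fun k => ¬ Even k), ((k : ZMod p))⁻¹) = 0 := by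
    rw [Finset.sum_filter_add_sum_filter_not]
    exact aux_sum_inv p hp hp2
  have hIoo : Finset.Ioo 0 p = Finset.Ico 1 p := by
    ext x; simp [Finset.mem_Ioo, Finset.mem_Ico]; omega
  set S0 := ∑ k ∈ (Finset.Ico 1 p).filter (fun k => Even k), ((k : ZMod p))⁻¹ with hS0
  have part1 : 2 * S0 = -(2 * ((q : ℕ) : ZMod p)) := by
    have : ((2 * q : ℕ) : ZMod p) = -S0 - S0 := by
      rw [hcastsum, hsplit]
      have hodd' : ∑ k ∈ (Finset.Ico 1 p).filter (fun k => ¬ Even k), ((k : ZMod p))⁻¹ = -S0 := by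
        linear_combination hall
      rw [hodd']
    push_cast at this
    linear_combination this
  constructor
  · rw [hIoo]; exact part1
  · -- second part
    have hbij : ∑ j ∈ Finset.Icc 1 ((p-1)/2), (((2*j : ℕ) : ZMod p))⁻¹ = S0 := by
      rw [hS0]
      refine Finset.sum_nbij' (fun j => 2*j) (fun k => k/2) ?_ ?_ ?_ ?_ ?_
      · intro a ha
        simp only [Finset.mem_Icc] at ha
        simp only [Finset.mem_filter, Finset.mem_Ico]
        rcases hodd with ⟨m, hm⟩
        exact ⟨⟨by omega, by omega⟩, ⟨a, by ring⟩⟩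
      · intro k hk
        simp only [Finset.mem_filter, Finset.mem_Ico] at hk
        simp only [Finset.mem_Icc]
        rcases hk.2 with ⟨t, ht⟩
        rcases hodd with ⟨m, hm⟩
        omega
      · intro a _; omega
      · intro k hk
        simp only [Finset.mem_filter, Finset.mem_Ico] at hk
        rcases hk.2 with ⟨t, ht⟩
        omega
      · intro a _; rfl
    have hdouble : ∑ j ∈ Finset.Icc 1 ((p-1)/2), ((j : ZMod p))⁻¹
        = 2 * ∑ j ∈ Finset.Icc 1 ((p-1)/2), (((2*j : ℕ) : ZMod p))⁻¹ := by
      rw [Finset.mul_sum]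
      refine Finset.sum_congr rfl (fun j _ => ?_)
      push_cast
      rw [mul_inv_rev]
      rw [← mul_assoc, mul_comm (2 : ZMod p), mul_assoc, mul_inv_cancel₀ h2ne]
      ring
    rw [hdouble, hbij]
    exact part1
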